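/- Let L > 0, let m ≥ 2 be an integer, and let γ_m : [0,L] → ℝ³ be the m-fold covered circle γ_m(s) = (L/(2πm))·(cos(2πms/L), sin(2πms/L), 0). Assume every local minimizer of the bending energy B, among curves in W^{2,2}_arc(0,L;ℝ³) with the same clamped boundary data as γ_m, is of class C²([0,L];ℝ³). Then γ_m is not a local minimizer of B among curves ξ ∈ W^{2,2}_arc(0,L;ℝ³) satisfying ξ(0) = γ_m(0), ξ(L) = γ_m(L), ξ'(0) = γ_m'(0), ξ'(L) = γ_m'(L); in particular, a more than once covered circular elastica is unstable among closed curves of fixed length in ℝ³. -/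

import Mathlib

open MeasureTheory Set Filter RealInnerProductSpace

noncomputable section

/-- Euclidean 3-space. -/
abbrev R3 := EuclideanSpace ℝ (Fin 3)

/-- The point of `ℝ³` with coordinates `(a, b, c)`. -/
def e3 (a b c : ℝ) : R3 := (WithLp.equiv 2 (Fin 3 → ℝ)).symm ![a, b, c]

/-- `γ` (restricted to `[0,L]`) is an arclength parameterized `W^{2,2}` space curve:
`γ` is `C¹` and unit-speed on `[0,L]`, `γ'` is absolutely continuous (it is recovered from
its a.e. derivative by integration), and the second derivative lies in `L²(0,L)`. -/
structure ArcCurve3 (L : ℝ) (γ : ℝ → R3) : Prop where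
  c1 : ContDiffOn ℝ 1 γ (Icc 0 L)
  unit : ∀ s ∈ Icc (0:ℝ) L, ‖deriv γ s‖ = 1
  ac : ∀ a ∈ Icc (0:ℝ) L, ∀ b ∈ Icc (0:ℝ) L,
    deriv γ b - deriv γ a = ∫ s in a..b, deriv (deriv γ) s
  l2 : MemLp (fun s => deriv (deriv γ) s) 2 (volume.restrict (Icc 0 L))

/-- The bending energy `B(γ) = ∫₀^L |γ''|² ds`. -/
def Ben (L : ℝ) (γ : ℝ → R3) : ℝ := ∫ s in Icc (0:ℝ) L, ‖deriv (deriv γ) s‖ ^ 2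

/-- The `W^{2,2}`-distance between two curves on `[0,L]`. -/
def W22Dist (L : ℝ) (γ ξ : ℝ → R3) : ℝ :=
  Real.sqrt (∫ s in Icc (0:ℝ) L, (‖γ s - ξ s‖ ^ 2 + ‖deriv γ s - deriv ξ s‖ ^ 2 +
    ‖deriv (deriv γ) s - deriv (deriv ξ) s‖ ^ 2))

/-- The admissible class `A_c` with clamped boundary conditions in `ℝ³`. -/
def Adm3 (L : ℝ) (P0 P1 V0 V1 : R3) (γ : ℝ → R3) : Prop :=
  ArcCurve3 L γ ∧ γ 0 = P0 ∧ γ L = P1 ∧ deriv γ 0 = V0 ∧ deriv γ L = V1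

/-- Global minimizer of the bending energy in `A_c`. -/
def IsGlobalMin3 (L : ℝ) (P0 P1 V0 V1 : R3) (γ : ℝ → R3) : Prop :=
  Adm3 L P0 P1 V0 V1 γ ∧ ∀ ξ, Adm3 L P0 P1 V0 V1 ξ → Ben L γ ≤ Ben L ξ

/-- Local minimizer of the bending energy in `A_c` (w.r.t. the `W^{2,2}` topology). -/
def IsLocalMin3 (L : ℝ) (P0 P1 V0 V1 : R3) (γ : ℝ → R3) : Prop :=
  Adm3 L P0 P1 V0 V1 γ ∧
    ∃ δ > 0, ∀ ξ, Adm3 L P0 P1 V0 V1 ξ → W22Dist L γ ξ < δ → Ben L γ ≤ Ben L ξ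

/-! ### Auxiliary material -/

lemma e3_congr {a b c a' b' c' : ℝ} (ha : a = a') (hb : b = b') (hc : c = c') :
    e3 a b c = e3 a' b' c' := by rw [ha, hb, hc]

lemma e3_sub (a b c a' b' c' : ℝ) : e3 a b c - e3 a' b' c' = e3 (a-a') (b-b') (c-c') := by
  ext i; fin_cases i <;> simp [e3]

lemma e3_smul (r a b c : ℝ) : r • e3 a b c = e3 (r*a) (r*b) (r*c) := by
  ext i; fin_cases i <;> simp [e3]

lemma norm_e3_sq (a b c : ℝ) : ‖e3 a b c‖^2 = a^2+b^2+c^2 := by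
  rw [EuclideanSpace.norm_eq, Real.sq_sqrt (by positivity)]
  simp [e3, Fin.sum_univ_three]

lemma e3_apply_two (a b c : ℝ) : (e3 a b c) 2 = c := rfl

lemma hasDerivAt_e3 {a b c : ℝ → ℝ} {a' b' c' : ℝ} {s : ℝ}
    (ha : HasDerivAt a a' s) (hb : HasDerivAt b b' s) (hc : HasDerivAt c c' s) :
    HasDerivAt (fun t => e3 (a t) (b t) (c t)) (e3 a' b' c') s := by
  have h : HasDerivAt (fun t => (![a t, b t, c t] : Fin 3 → ℝ)) ![a', b', c'] s := by
    rw [hasDerivAt_pi]; intro i; fin_cases i <;> simpa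
  exact ((PiLp.continuousLinearEquiv 2 ℝ
    (fun _ : Fin 3 => ℝ)).symm.toContinuousLinearMap.hasFDerivAt).comp_hasDerivAt s h

lemma continuous_e3 {a b c : ℝ → ℝ} (ha : Continuous a) (hb : Continuous b)
    (hc : Continuous c) : Continuous (fun t => e3 (a t) (b t) (c t)) := by
  apply (PiLp.continuousLinearEquiv 2 ℝ (fun _ : Fin 3 => ℝ)).symm.continuous.comp
  apply continuous_pi; intro i; fin_cases i <;> simpa

lemma piecewise_hasDerivAt {f g f' g' : ℝ → R3} {l : ℝ}
    (hf : ∀ s, HasDerivAt f (f' s) s) (hg : ∀ s, HasDerivAt g (g' s) s)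
    (hv : f l = g l) (hd : f' l = g' l) (s : ℝ) :
    HasDerivAt (fun t => if t ≤ l then f t else g t)
      (if s ≤ l then f' s else g' s) s := by
  rcases lt_trichotomy s l with h | h | h
  · rw [if_pos h.le]
    apply (hf s).congr_of_eventuallyEq
    filter_upwards [Iio_mem_nhds h] with t ht
    rw [if_pos (le_of_lt ht)]
  · subst h
    rw [if_pos le_rfl]
    have h1 : HasDerivWithinAt (fun t => if t ≤ s then f t else g t) (f' s) (Iic s) s := by
      apply (hf s).hasDerivWithinAt.congr
      · intro t ht; rw [if_pos (mem_Iic.1 ht)]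
      · rw [if_pos le_rfl]
    have h2 : HasDerivWithinAt (fun t => if t ≤ s then f t else g t) (f' s) (Ici s) s := by
      rw [hd]
      apply (hg s).hasDerivWithinAt.congr
      · intro t ht
        rcases eq_or_lt_of_le (mem_Ici.1 ht) with h | h
        · rw [← h, if_pos le_rfl, hv]
        · rw [if_neg (not_le.2 h)]
      · rw [if_pos le_rfl, hv]
    have := h1.union h2
    rwa [Iic_union_Ici, hasDerivWithinAt_univ] at this
  · rw [if_neg (not_le.2 h)]
    apply (hg s).congr_of_eventuallyEq
    filter_upwards [Ioi_mem_nhds h] with t ht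
    rw [if_neg (not_le.2 ht)]

lemma piecewise_hasDerivAt_offjunction {f g f' g' : ℝ → R3} {l : ℝ}
    (hf : ∀ s, HasDerivAt f (f' s) s) (hg : ∀ s, HasDerivAt g (g' s) s)
    {s : ℝ} (hs : s ≠ l) :
    HasDerivAt (fun t => if t ≤ l then f t else g t)
      (if s ≤ l then f' s else g' s) s := by
  rcases lt_or_gt_of_ne hs with h | h
  · rw [if_pos h.le]
    apply (hf s).congr_of_eventuallyEq
    filter_upwards [Iio_mem_nhds h] with t ht
    rw [if_pos (le_of_lt ht)]
  · rw [if_neg (not_le.2 h)]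
    apply (hg s).congr_of_eventuallyEq
    filter_upwards [Ioi_mem_nhds h] with t ht
    rw [if_neg (not_le.2 ht)]

lemma II_of_bounded {f : ℝ → R3} {C : ℝ} (hm : AEStronglyMeasurable f volume)
    (hb : ∀ s, ‖f s‖ ≤ C) (a b : ℝ) : IntervalIntegrable f volume a b := by
  rw [intervalIntegrable_iff]
  exact Integrable.mono' (integrableOn_const measure_Ioc_lt_top.ne)
    hm.restrict (ae_of_all _ hb)

lemma integrableOn_Icc_of_bounded {f : ℝ → ℝ} {a b C : ℝ}
    (hm : AEStronglyMeasurable f (volume.restrict (Icc a b)))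
    (hb : ∀ᵐ s ∂(volume.restrict (Icc a b)), ‖f s‖ ≤ C) :
    IntegrableOn f (Icc a b) volume :=
  Integrable.mono' (integrableOn_const measure_Icc_lt_top.ne) hm hb

namespace IMC
variable (r ω c sn : ℝ)

def Gf : ℝ → R3 := fun s => e3 (r*Real.cos (ω*s)) (r*Real.sin (ω*s)) 0
def G1 : ℝ → R3 := fun s => e3 (-Real.sin (ω*s)) (Real.cos (ω*s)) 0
def G2 : ℝ → R3 := fun s => e3 (-(ω*Real.cos (ω*s))) (-(ω*Real.sin (ω*s))) 0
def Ff : ℝ → R3 := fun s =>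
  e3 (r + c*(r*Real.cos (ω*s) - r)) (r*Real.sin (ω*s)) (-(sn*(r*Real.cos (ω*s) - r)))
def F1 : ℝ → R3 := fun s => e3 (-(c*Real.sin (ω*s))) (Real.cos (ω*s)) (sn*Real.sin (ω*s))
def F2 : ℝ → R3 := fun s =>
  e3 (-(c*(ω*Real.cos (ω*s)))) (-(ω*Real.sin (ω*s))) (sn*(ω*Real.cos (ω*s)))

lemma hd_cos (s : ℝ) : HasDerivAt (fun t => Real.cos (ω*t)) (-(ω*Real.sin (ω*s))) s := by
  have h := (Real.hasDerivAt_cos (ω*s)).comp s ((hasDerivAt_id s).const_mul ω)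
  exact h.congr_deriv (by ring)

lemma hd_sin (s : ℝ) : HasDerivAt (fun t => Real.sin (ω*t)) (ω*Real.cos (ω*s)) s := by
  have h := (Real.hasDerivAt_sin (ω*s)).comp s ((hasDerivAt_id s).const_mul ω)
  exact h.congr_deriv (by ring)

variable {r ω}

lemma hd_Gf (hrω : r*ω = 1) (s : ℝ) : HasDerivAt (Gf r ω) (G1 ω s) s := by
  apply hasDerivAt_e3
  · have h := (hd_cos ω s).const_mul r
    exact h.congr_deriv (by linear_combination (-(Real.sin (ω*s))) * hrω)
  · have h := (hd_sin ω s).const_mul r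
    exact h.congr_deriv (by linear_combination (Real.cos (ω*s)) * hrω)
  · exact hasDerivAt_const s 0

lemma hd_G1 (s : ℝ) : HasDerivAt (G1 ω) (G2 ω s) s := by
  apply hasDerivAt_e3
  · exact (hd_sin ω s).neg
  · exact hd_cos ω s
  · exact hasDerivAt_const s 0

lemma hd_Ff (hrω : r*ω = 1) (s : ℝ) : HasDerivAt (Ff r ω c sn) (F1 ω c sn s) s := by
  apply hasDerivAt_e3
  · have h := ((((hd_cos ω s).const_mul r).sub_const r).const_mul c).const_add r
    exact h.congr_deriv (by linear_combination (-(c*Real.sin (ω*s))) * hrω)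
  · have h := (hd_sin ω s).const_mul r
    exact h.congr_deriv (by linear_combination (Real.cos (ω*s)) * hrω)
  · have h := ((((hd_cos ω s).const_mul r).sub_const r).const_mul sn).neg
    exact h.congr_deriv (by linear_combination (sn*Real.sin (ω*s)) * hrω)

lemma hd_F1 (s : ℝ) : HasDerivAt (F1 ω c sn) (F2 ω c sn s) s := by
  apply hasDerivAt_e3
  · exact ((hd_sin ω s).const_mul c).neg
  · exact hd_cos ω s
  · exact (hd_sin ω s).const_mul sn

lemma cont_Gf : Continuous (Gf r ω) := by apply continuous_e3 <;> fun_prop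
lemma cont_G1 : Continuous (G1 ω) := by apply continuous_e3 <;> fun_prop
lemma cont_G2 : Continuous (G2 ω) := by apply continuous_e3 <;> fun_prop
lemma cont_Ff : Continuous (Ff r ω c sn) := by apply continuous_e3 <;> fun_prop
lemma cont_F1 : Continuous (F1 ω c sn) := by apply continuous_e3 <;> fun_prop
lemma cont_F2 : Continuous (F2 ω c sn) := by apply continuous_e3 <;> fun_prop

lemma norm_G1 (s : ℝ) : ‖G1 ω s‖ = 1 := by
  have h : ‖G1 ω s‖^2 = 1 := by
    rw [G1, norm_e3_sq]
    linear_combination Real.sin_sq_add_cos_sq (ω*s)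
  nlinarith [norm_nonneg (G1 ω s)]

lemma norm_F1 (hc1 : c^2 + sn^2 = 1) (s : ℝ) : ‖F1 ω c sn s‖ = 1 := by
  have h : ‖F1 ω c sn s‖^2 = 1 := by
    rw [F1, norm_e3_sq]
    nlinarith [Real.sin_sq_add_cos_sq (ω*s)]
  nlinarith [norm_nonneg (F1 ω c sn s)]

lemma normsq_G2 (s : ℝ) : ‖G2 ω s‖^2 = ω^2 := by
  rw [G2, norm_e3_sq]
  nlinarith [Real.sin_sq_add_cos_sq (ω*s)]

lemma normsq_F2 (hc1 : c^2 + sn^2 = 1) (s : ℝ) : ‖F2 ω c sn s‖^2 = ω^2 := by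
  rw [F2, norm_e3_sq]
  linear_combination (ω^2*Real.cos (ω*s)^2) * hc1 + ω^2 * Real.sin_sq_add_cos_sq (ω*s)

lemma Ff_eq_Gf {l : ℝ} (hc : Real.cos (ω*l) = 1) (hs : Real.sin (ω*l) = 0) :
    Ff r ω c sn l = Gf r ω l := by
  rw [Ff, Gf, hc, hs]; exact e3_congr (by ring) (by ring) (by ring)

lemma F1_eq_G1 {l : ℝ} (hc : Real.cos (ω*l) = 1) (hs : Real.sin (ω*l) = 0) :
    F1 ω c sn l = G1 ω l := by
  rw [F1, G1, hc, hs]; exact e3_congr (by ring) (by ring) (by ring)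

lemma sum_diff_bound (hc1 : c^2 + sn^2 = 1) {t : ℝ} (ht : (1-c)^2 + sn^2 ≤ t) (s : ℝ) :
    ‖Gf r ω s - Ff r ω c sn s‖^2 + ‖G1 ω s - F1 ω c sn s‖^2 +
      ‖G2 ω s - F2 ω c sn s‖^2 ≤ t * (4*r^2 + 1 + ω^2) := by
  have h0 : ‖Gf r ω s - Ff r ω c sn s‖^2
      = ((1-c)^2+sn^2) * (r*(Real.cos (ω*s)-1))^2 := by
    rw [Gf, Ff, e3_sub, norm_e3_sq]; ring
  have h1 : ‖G1 ω s - F1 ω c sn s‖^2 = ((1-c)^2+sn^2) * (Real.sin (ω*s))^2 := by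
    rw [G1, F1, e3_sub, norm_e3_sq]; ring
  have h2 : ‖G2 ω s - F2 ω c sn s‖^2 = ((1-c)^2+sn^2) * (ω*Real.cos (ω*s))^2 := by
    rw [G2, F2, e3_sub, norm_e3_sq]; ring
  have hb1 : (Real.cos (ω*s)-1)^2 ≤ 4 := by
    nlinarith [Real.neg_one_le_cos (ω*s), Real.cos_le_one (ω*s)]
  have hb2 : (Real.sin (ω*s))^2 ≤ 1 := by
    nlinarith [Real.neg_one_le_sin (ω*s), Real.sin_le_one (ω*s)]
  have hb3 : (Real.cos (ω*s))^2 ≤ 1 := by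
    nlinarith [Real.neg_one_le_cos (ω*s), Real.cos_le_one (ω*s)]
  have hτ0 : (0:ℝ) ≤ (1-c)^2 + sn^2 := by positivity
  have e : ‖Gf r ω s - Ff r ω c sn s‖^2 + ‖G1 ω s - F1 ω c sn s‖^2 +
      ‖G2 ω s - F2 ω c sn s‖^2
      = ((1-c)^2+sn^2) * ((r*(Real.cos (ω*s)-1))^2 + (Real.sin (ω*s))^2
        + (ω*Real.cos (ω*s))^2) := by
    rw [h0, h1, h2]; ring
  have hinner : (r*(Real.cos (ω*s)-1))^2 + (Real.sin (ω*s))^2 + (ω*Real.cos (ω*s))^2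
      ≤ 4*r^2 + 1 + ω^2 := by
    nlinarith [mul_le_mul_of_nonneg_left hb1 (sq_nonneg r),
      mul_le_mul_of_nonneg_left hb3 (sq_nonneg ω)]
  rw [e]
  exact mul_le_mul ht hinner (by positivity) (le_trans hτ0 ht)

end IMC

lemma normsq_sub_le (x y : R3) : ‖x - y‖^2 ≤ 2*‖x‖^2 + 2*‖y‖^2 := by
  have h : ‖x - y‖ ≤ ‖x‖ + ‖y‖ := norm_sub_le x y
  nlinarith [mul_self_le_mul_self (norm_nonneg (x-y)) h, sq_nonneg (‖x‖ - ‖y‖),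
    norm_nonneg x, norm_nonneg y]

lemma normsq_tri (x y z : R3) : ‖x - z‖^2 ≤ 2*‖x-y‖^2 + 2*‖y-z‖^2 := by
  have h : ‖x - z‖ ≤ ‖x - y‖ + ‖y - z‖ := norm_sub_le_norm_sub_add_norm_sub x y z
  nlinarith [mul_self_le_mul_self (norm_nonneg (x-z)) h, sq_nonneg (‖x-y‖ - ‖y-z‖),
    norm_nonneg (x-y), norm_nonneg (y-z)]

set_option maxHeartbeats 4000000 in
/-- instability of multiply covered circles in `ℝ³`. -/
theorem instability_multifold_circle_spatial (L : ℝ) (hL : 0 < L) (m : ℕ) (hm : 2 ≤ m)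
    (γm : ℝ → R3)
    (hγm : ∀ s, γm s = (L / (2 * Real.pi * m)) •
      e3 (Real.cos (2 * Real.pi * m * s / L)) (Real.sin (2 * Real.pi * m * s / L)) 0)
    (H : ∀ ξ, IsLocalMin3 L (γm 0) (γm L) (deriv γm 0) (deriv γm L) ξ →
      ContDiffOn ℝ 2 ξ (Icc 0 L)) :
    ¬ IsLocalMin3 L (γm 0) (γm L) (deriv γm 0) (deriv γm L) γm := by
  intro hmin
  have hπ := Real.pi_pos
  have hm1 : (1:ℝ) < (m:ℝ) := by exact_mod_cast Nat.lt_of_lt_of_le one_lt_two hm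
  have hmpos : (0:ℝ) < (m:ℝ) := by linarith
  set ω : ℝ := 2*Real.pi*m/L with hωdef
  set r : ℝ := L/(2*Real.pi*m) with hrdef
  have hωpos : 0 < ω := div_pos (by positivity) hL
  have hrpos : 0 < r := div_pos hL (by positivity)
  have hrω : r*ω = 1 := by
    rw [hrdef, hωdef]; field_simp
  set l : ℝ := L/m with hldef
  have hl0 : 0 < l := div_pos hL hmpos
  have hlL : l < L := div_lt_self hL hm1
  have hωl : ω*l = 2*Real.pi := by
    rw [hωdef, hldef]; field_simp
  have hγ : γm = IMC.Gf r ω := by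
    funext s
    rw [hγm s]
    have harg : 2*Real.pi*m*s/L = ω*s := by rw [hωdef]; ring
    rw [e3_smul, IMC.Gf]
    exact e3_congr (by rw [harg, hrdef]) (by rw [harg, hrdef]) (mul_zero _)
  rw [hγ] at hmin H
  clear hγm
  obtain ⟨hAdmγ, δ, hδpos, hloc⟩ := hmin
  -- parameters of the rotated competitor
  set K : ℝ := 4*r^2 + 1 + ω^2 with hKdef
  have hKpos : 0 < K := by positivity
  set θ : ℝ := min 1 (δ^2/(8*(K*L+1))) with hθdef
  have hθpos : 0 < θ := lt_min one_pos (by positivity)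
  have hθ1 : θ ≤ 1 := min_le_left _ _
  have hθle : θ ≤ δ^2/(8*(K*L+1)) := min_le_right _ _
  set c : ℝ := Real.cos θ with hcdef
  set sn : ℝ := Real.sin θ with hsndef
  have hc1 : c^2 + sn^2 = 1 := by
    rw [hcdef, hsndef]; exact Real.cos_sq_add_sin_sq θ
  have hsnpos : 0 < sn := by
    rw [hsndef]
    exact Real.sin_pos_of_pos_of_lt_pi hθpos (lt_of_le_of_lt hθ1 (by nlinarith [Real.pi_gt_three]))
  have hτ : (1-c)^2 + sn^2 ≤ θ^2 := by
    have h1 : 1 - θ^2/2 ≤ c := by rw [hcdef]; exact Real.one_sub_sq_div_two_le_cos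
    nlinarith [Real.cos_le_one θ]
  -- the competitor and its derivatives
  set Xi : ℝ → R3 := fun s => if s ≤ l then IMC.Ff r ω c sn s else IMC.Gf r ω s with hXidef
  set D1 : ℝ → R3 := fun s => if s ≤ l then IMC.F1 ω c sn s else IMC.G1 ω s with hD1def
  set DD2 : ℝ → R3 := fun s => if s ≤ l then IMC.F2 ω c sn s else IMC.G2 ω s with hDD2def
  have hcl : Real.cos (ω*l) = 1 := by rw [hωl]; exact Real.cos_two_pi
  have hsl : Real.sin (ω*l) = 0 := by rw [hωl]; exact Real.sin_two_pi
  have hc0 : Real.cos (ω*0) = 1 := by rw [mul_zero]; exact Real.cos_zero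
  have hs0 : Real.sin (ω*0) = 0 := by rw [mul_zero]; exact Real.sin_zero
  have jv : IMC.Ff r ω c sn l = IMC.Gf r ω l := IMC.Ff_eq_Gf c sn hcl hsl
  have jd : IMC.F1 ω c sn l = IMC.G1 ω l := IMC.F1_eq_G1 c sn hcl hsl
  have hXi : ∀ s, HasDerivAt Xi (D1 s) s :=
    fun s => piecewise_hasDerivAt (IMC.hd_Ff c sn hrω) (IMC.hd_Gf hrω) jv jd s
  have hderivXi : deriv Xi = D1 := funext fun s => (hXi s).deriv
  have hD1' : ∀ s, s ≠ l → HasDerivAt D1 (DD2 s) s :=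
    fun s hs => piecewise_hasDerivAt_offjunction (IMC.hd_F1 c sn) IMC.hd_G1 hs
  have hderivD1 : ∀ s, s ≠ l → deriv D1 s = DD2 s := fun s hs => (hD1' s hs).deriv
  have contXi : Continuous Xi :=
    Continuous.if_le (IMC.cont_Ff c sn) (IMC.cont_Gf) continuous_id continuous_const
      (fun x hx => by rw [hx]; exact jv)
  have contD1 : Continuous D1 :=
    Continuous.if_le (IMC.cont_F1 c sn) (IMC.cont_G1) continuous_id continuous_const
      (fun x hx => by rw [hx]; exact jd)
  have measDD2 : StronglyMeasurable DD2 :=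
    StronglyMeasurable.ite measurableSet_Iic (IMC.cont_F2 c sn).stronglyMeasurable
      (IMC.cont_G2).stronglyMeasurable
  have hD1app : ∀ s, D1 s = if s ≤ l then IMC.F1 ω c sn s else IMC.G1 ω s := fun _ => rfl
  have hDD2app : ∀ s, DD2 s = if s ≤ l then IMC.F2 ω c sn s else IMC.G2 ω s := fun _ => rfl
  have hXiapp : ∀ s, Xi s = if s ≤ l then IMC.Ff r ω c sn s else IMC.Gf r ω s := fun _ => rfl
  have hnormD1 : ∀ s, ‖D1 s‖ = 1 := by
    intro s
    rw [hD1app]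
    by_cases h : s ≤ l
    · rw [if_pos h]; exact IMC.norm_F1 c sn hc1 s
    · rw [if_neg h]; exact IMC.norm_G1 s
  have hnormsqDD2 : ∀ s, ‖DD2 s‖^2 = ω^2 := by
    intro s
    rw [hDD2app]
    by_cases h : s ≤ l
    · rw [if_pos h]; exact IMC.normsq_F2 c sn hc1 s
    · rw [if_neg h]; exact IMC.normsq_G2 s
  have hnormDD2 : ∀ s, ‖DD2 s‖ ≤ ω := by
    intro s
    nlinarith [hnormsqDD2 s, norm_nonneg (DD2 s), hωpos]
  have hae : ∀ᵐ s : ℝ, s ≠ l := by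
    rw [ae_iff]
    have he : {x : ℝ | ¬ x ≠ l} = {l} := by ext x; simp
    rw [he]
    exact measure_singleton l
  have haed : ∀ᵐ s : ℝ, deriv (deriv Xi) s = DD2 s := by
    rw [hderivXi]
    filter_upwards [hae] with s hs
    exact hderivD1 s hs
  have II_DD2 : ∀ a b : ℝ, IntervalIntegrable DD2 volume a b :=
    II_of_bounded measDD2.aestronglyMeasurable hnormDD2
  have II_derivD1 : ∀ a b : ℝ, IntervalIntegrable (deriv D1) volume a b := by
    intro a b
    apply (II_DD2 a b).congr_ae
    filter_upwards [ae_restrict_of_ae hae] with s hs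
    exact (hderivD1 s hs).symm
  have key0 : ∀ a b : ℝ, a ≤ b → (∀ x ∈ Ioo a b, x ≠ l) →
      ∫ s in a..b, deriv D1 s = D1 b - D1 a := by
    intro a b hab hne
    apply intervalIntegral.integral_eq_sub_of_hasDeriv_right_of_le hab
      contD1.continuousOn ?_ (II_derivD1 a b)
    intro x hx
    rw [hderivD1 x (hne x hx)]
    exact (hD1' x (hne x hx)).hasDerivWithinAt
  have key : ∀ a b : ℝ, a ≤ b → ∫ s in a..b, deriv D1 s = D1 b - D1 a := by
    intro a b hab
    rcases le_total b l with h | h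
    · exact key0 a b hab (fun x hx => ne_of_lt (lt_of_lt_of_le hx.2 h))
    · rcases le_total l a with h' | h'
      · exact key0 a b hab (fun x hx => ne_of_gt (lt_of_le_of_lt h' hx.1))
      · rw [← intervalIntegral.integral_add_adjacent_intervals (II_derivD1 a l) (II_derivD1 l b),
          key0 a l h' (fun x hx => ne_of_lt hx.2), key0 l b h (fun x hx => ne_of_gt hx.1)]
        abel
  haveI : IsFiniteMeasure (volume.restrict (Icc (0:ℝ) L)) :=
    ⟨by rw [Measure.restrict_apply_univ]; exact measure_Icc_lt_top⟩
  have hDD2mem : MemLp DD2 2 (volume.restrict (Icc (0:ℝ) L)) :=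
    MemLp.of_bound measDD2.aestronglyMeasurable.restrict ω (ae_of_all _ hnormDD2)
  have arcXi : ArcCurve3 L Xi := by
    constructor
    · exact (contDiff_one_iff_deriv.2
        ⟨fun s => (hXi s).differentiableAt, by rw [hderivXi]; exact contD1⟩).contDiffOn
    · intro s _
      rw [hderivXi]; exact hnormD1 s
    · intro a _ b _
      rw [hderivXi]
      rcases le_total a b with h | h
      · exact (key a b h).symm
      · rw [intervalIntegral.integral_symm, key b a h]; abel
    · exact (memLp_congr_ae (ae_restrict_of_ae haed)).2 hDD2mem
  -- boundary data
  have jv0 : IMC.Ff r ω c sn 0 = IMC.Gf r ω 0 := IMC.Ff_eq_Gf c sn hc0 hs0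
  have jd0 : IMC.F1 ω c sn 0 = IMC.G1 ω 0 := IMC.F1_eq_G1 c sn hc0 hs0
  have hderivGf : deriv (IMC.Gf r ω) = IMC.G1 ω := funext fun s => (IMC.hd_Gf hrω s).deriv
  have hderivG1 : deriv (IMC.G1 ω) = IMC.G2 ω := funext fun s => (IMC.hd_G1 s).deriv
  have hXi0 : Xi 0 = IMC.Gf r ω 0 := by rw [hXiapp, if_pos hl0.le]; exact jv0
  have hXiL : Xi L = IMC.Gf r ω L := by rw [hXiapp, if_neg (not_le.2 hlL)]
  have hD10 : deriv Xi 0 = deriv (IMC.Gf r ω) 0 := by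
    rw [hderivXi, hderivGf, hD1app, if_pos hl0.le]; exact jd0
  have hD1L : deriv Xi L = deriv (IMC.Gf r ω) L := by
    rw [hderivXi, hderivGf, hD1app, if_neg (not_le.2 hlL)]
  have admXi : Adm3 L (IMC.Gf r ω 0) (IMC.Gf r ω L)
      (deriv (IMC.Gf r ω) 0) (deriv (IMC.Gf r ω) L) Xi := ⟨arcXi, hXi0, hXiL, hD10, hD1L⟩
  -- energies agree
  have hBenXi : Ben L Xi = Ben L (IMC.Gf r ω) := by
    have e1 : ∫ s in Icc (0:ℝ) L, ‖deriv (deriv Xi) s‖^2 = ∫ s in Icc (0:ℝ) L, (ω^2 : ℝ) :=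
      setIntegral_congr_ae measurableSet_Icc
        (by filter_upwards [haed] with s hs _; rw [hs]; exact hnormsqDD2 s)
    have e2 : ∫ s in Icc (0:ℝ) L, ‖deriv (deriv (IMC.Gf r ω)) s‖^2
        = ∫ s in Icc (0:ℝ) L, (ω^2 : ℝ) := by
      rw [hderivGf, hderivG1]
      exact setIntegral_congr_fun measurableSet_Icc (fun s _ => IMC.normsq_G2 s)
    rw [Ben, Ben, e1, e2]
  -- the A-integrand and its estimates
  set At : ℝ → ℝ := fun s => ‖IMC.Gf r ω s - Xi s‖^2 + ‖IMC.G1 ω s - D1 s‖^2 +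
    ‖IMC.G2 ω s - DD2 s‖^2 with hAtdef
  have hAtapp : ∀ s, At s = ‖IMC.Gf r ω s - Xi s‖^2 + ‖IMC.G1 ω s - D1 s‖^2 +
    ‖IMC.G2 ω s - DD2 s‖^2 := fun _ => rfl
  have hAt0 : ∀ s, 0 ≤ At s := by intro s; rw [hAtapp]; positivity
  have hAtb : ∀ s, At s ≤ θ^2 * K := by
    intro s
    rw [hAtapp, hXiapp, hD1app, hDD2app]
    by_cases h : s ≤ l
    · rw [if_pos h, if_pos h, if_pos h, hKdef]
      exact IMC.sum_diff_bound c sn hc1 hτ s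
    · rw [if_neg h, if_neg h, if_neg h]
      simp only [sub_self, norm_zero]
      norm_num
      positivity
  have hAtm : AEStronglyMeasurable At (volume.restrict (Icc (0:ℝ) L)) := by
    have m1 : Measurable (fun s => ‖IMC.Gf r ω s - Xi s‖^2) :=
      ((IMC.cont_Gf.measurable.sub contXi.measurable).norm.pow_const 2)
    have m2 : Measurable (fun s => ‖IMC.G1 ω s - D1 s‖^2) :=
      ((IMC.cont_G1.measurable.sub contD1.measurable).norm.pow_const 2)
    have m3 : Measurable (fun s => ‖IMC.G2 ω s - DD2 s‖^2) :=
      ((IMC.cont_G2.measurable.sub measDD2.measurable).norm.pow_const 2)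
    exact ((m1.add m2).add m3).aestronglyMeasurable
  have hAtint : IntegrableOn At (Icc 0 L) volume := by
    apply integrableOn_Icc_of_bounded hAtm (C := θ^2*K)
    apply ae_of_all
    intro s
    rw [Real.norm_eq_abs, abs_of_nonneg (hAt0 s)]
    exact hAtb s
  have hAtle : ∫ s in Icc (0:ℝ) L, At s ≤ δ^2/8 := by
    have h1 : ∫ s in Icc (0:ℝ) L, At s ≤ ∫ _ in Icc (0:ℝ) L, (θ^2*K : ℝ) :=
      setIntegral_mono_on hAtint (integrableOn_const measure_Icc_lt_top.ne)
        measurableSet_Icc (fun s _ => hAtb s)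
    have h2 : ∫ _ in Icc (0:ℝ) L, (θ^2*K : ℝ) = θ^2*(K*L) := by
      rw [setIntegral_const, Real.volume_real_Icc_of_le hL.le, smul_eq_mul, sub_zero]
      ring
    have hKL : 0 < K*L := mul_pos hKpos hL
    have hθ2 : θ^2 ≤ θ := by nlinarith
    have h3 : θ^2*(K*L) ≤ θ*(K*L) := mul_le_mul_of_nonneg_right hθ2 hKL.le
    have h4 : θ*(K*L) ≤ (δ^2/(8*(K*L+1)))*(K*L) := mul_le_mul_of_nonneg_right hθle hKL.le
    have h5 : (δ^2/(8*(K*L+1)))*(K*L) ≤ δ^2/8 := by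
      rw [div_mul_eq_mul_div, div_le_div_iff₀ (by positivity) (by norm_num)]
      nlinarith [sq_nonneg δ]
    calc ∫ s in Icc (0:ℝ) L, At s ≤ ∫ _ in Icc (0:ℝ) L, (θ^2*K : ℝ) := h1
      _ = θ^2*(K*L) := h2
      _ ≤ θ*(K*L) := h3
      _ ≤ (δ^2/(8*(K*L+1)))*(K*L) := h4
      _ ≤ δ^2/8 := h5
  -- Xi is a local minimizer
  have hXiMin : IsLocalMin3 L (IMC.Gf r ω 0) (IMC.Gf r ω L)
      (deriv (IMC.Gf r ω) 0) (deriv (IMC.Gf r ω) L) Xi := by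
    refine ⟨admXi, δ/2, by linarith, ?_⟩
    intro η hη hW
    rw [hBenXi]
    apply hloc η hη
    -- estimate the distance from the circle to η
    obtain ⟨hηarc, hη0, hηL, hηd0, hηdL⟩ := hη
    set Qt : ℝ → ℝ := fun s => ‖Xi s - η s‖^2 + ‖deriv Xi s - deriv η s‖^2 +
      ‖deriv (deriv Xi) s - deriv (deriv η) s‖^2 with hQtdef
    have hQtapp : ∀ s, Qt s = ‖Xi s - η s‖^2 + ‖deriv Xi s - deriv η s‖^2 +
      ‖deriv (deriv Xi) s - deriv (deriv η) s‖^2 := fun _ => rfl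
    have hQt0 : ∀ s, 0 ≤ Qt s := by intro s; rw [hQtapp]; positivity
    have hQint0 : 0 ≤ ∫ s in Icc (0:ℝ) L, Qt s :=
      setIntegral_nonneg measurableSet_Icc (fun s _ => hQt0 s)
    have hQlt : ∫ s in Icc (0:ℝ) L, Qt s < (δ/2)^2 := by
      have hW' : Real.sqrt (∫ s in Icc (0:ℝ) L, Qt s) < δ/2 := hW
      exact (Real.sqrt_lt' (by positivity)).1 hW'
    have hηcont : ContinuousOn η (Icc 0 L) := hηarc.c1.continuousOn
    have q1 : IntegrableOn (fun s => ‖Xi s - η s‖^2) (Icc 0 L) volume :=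
      ((contXi.continuousOn.sub hηcont).norm.pow 2).integrableOn_Icc
    have q2 : IntegrableOn (fun s => ‖deriv Xi s - deriv η s‖^2) (Icc 0 L) volume := by
      apply integrableOn_Icc_of_bounded (C := 4)
      · exact (((stronglyMeasurable_deriv Xi).sub (stronglyMeasurable_deriv η)).norm.measurable.pow_const
          2).aestronglyMeasurable
      · rw [ae_restrict_iff' measurableSet_Icc]
        apply ae_of_all
        intro s hs
        have h1 : ‖deriv Xi s‖ = 1 := by rw [hderivXi]; exact hnormD1 s
        have h2 : ‖deriv η s‖ = 1 := hηarc.unit s hs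
        have h3 : ‖deriv Xi s - deriv η s‖ ≤ 2 := by
          calc ‖deriv Xi s - deriv η s‖ ≤ ‖deriv Xi s‖ + ‖deriv η s‖ := norm_sub_le _ _
          _ = 2 := by rw [h1, h2]; norm_num
        rw [Real.norm_eq_abs, abs_of_nonneg (by positivity)]
        nlinarith [norm_nonneg (deriv Xi s - deriv η s)]
    have hη2int : Integrable (fun s => ‖deriv (deriv η) s‖^2)
        (volume.restrict (Icc (0:ℝ) L)) := by
      have h := hηarc.l2.integrable_norm_rpow (by norm_num) (by norm_num)
      have h2 : (fun s => ‖deriv (deriv η) s‖^(2:ℕ))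
          = fun s => ‖deriv (deriv η) s‖ ^ ((2:ENNReal).toReal) := by
        funext x
        rw [ENNReal.toReal_ofNat, ← Real.rpow_natCast]
        norm_num
      rw [h2]
      exact h
    have q3 : IntegrableOn (fun s => ‖deriv (deriv Xi) s - deriv (deriv η) s‖^2)
        (Icc 0 L) volume := by
      apply Integrable.mono' (g := fun s => 2*ω^2 + 2*‖deriv (deriv η) s‖^2)
      · exact (integrable_const _).add (hη2int.const_mul 2)
      · exact (((stronglyMeasurable_deriv _).sub
          (stronglyMeasurable_deriv _)).norm.measurable.pow_const 2).aestronglyMeasurable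
      · filter_upwards [ae_restrict_of_ae haed] with s hs
        rw [Real.norm_eq_abs, abs_of_nonneg (by positivity)]
        have htr := normsq_sub_le (deriv (deriv Xi) s) (deriv (deriv η) s)
        have hb : ‖deriv (deriv Xi) s‖^2 = ω^2 := by rw [hs]; exact hnormsqDD2 s
        linarith
    have hQtint : IntegrableOn Qt (Icc 0 L) volume := (q1.add q2).add q3
    have hPmono : ∫ s in Icc (0:ℝ) L, (‖IMC.Gf r ω s - η s‖^2 +
        ‖deriv (IMC.Gf r ω) s - deriv η s‖^2 +
        ‖deriv (deriv (IMC.Gf r ω)) s - deriv (deriv η) s‖^2)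
        ≤ ∫ s in Icc (0:ℝ) L, (2*At s + 2*Qt s) := by
      apply integral_mono_of_nonneg
      · apply ae_of_all; intro s; positivity
      · exact (hAtint.const_mul 2).add (hQtint.const_mul 2)
      · filter_upwards [ae_restrict_of_ae haed] with s hs
        rw [hderivGf, hderivG1, hAtapp, hQtapp, hderivXi]
        have t1 := normsq_tri (IMC.Gf r ω s) (Xi s) (η s)
        have t2 := normsq_tri (IMC.G1 ω s) (D1 s) (deriv η s)
        have t3 := normsq_tri (IMC.G2 ω s) (DD2 s) (deriv (deriv η) s)
        rw [hderivXi] at hs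
        rw [hs]
        linarith
    have hsum : ∫ s in Icc (0:ℝ) L, (2*At s + 2*Qt s)
        = 2*(∫ s in Icc (0:ℝ) L, At s) + 2*(∫ s in Icc (0:ℝ) L, Qt s) := by
      rw [integral_add (hAtint.const_mul 2) (hQtint.const_mul 2),
        integral_const_mul, integral_const_mul]
    have hfinal : W22Dist L (IMC.Gf r ω) η < δ := by
      rw [W22Dist]
      apply (Real.sqrt_lt' hδpos).2
      calc ∫ s in Icc (0:ℝ) L, (‖IMC.Gf r ω s - η s‖^2 +
            ‖deriv (IMC.Gf r ω) s - deriv η s‖^2 +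
            ‖deriv (deriv (IMC.Gf r ω)) s - deriv (deriv η) s‖^2)
          ≤ 2*(∫ s in Icc (0:ℝ) L, At s) + 2*(∫ s in Icc (0:ℝ) L, Qt s) := by
            rw [← hsum]; exact hPmono
        _ < δ^2 := by nlinarith
    exact hfinal
  -- contradiction with interior regularity
  have hC2 := H Xi hXiMin
  have hlmem : Icc (0:ℝ) L ∈ nhds l := Icc_mem_nhds hl0 hlL
  have hCAt : ContDiffAt ℝ 2 Xi l := hC2.contDiffAt hlmem
  have hCAt' : ContDiffAt ℝ ((1:ℕ)+1) Xi l := by exact_mod_cast hCAt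
  rw [contDiffAt_succ_iff_hasFDerivAt] at hCAt'
  obtain ⟨f', ⟨u, hu, hf'⟩, hf'c⟩ := hCAt'
  have hdiff1 : DifferentiableAt ℝ f' l := hf'c.differentiableAt (by simp)
  have hdiffapp : DifferentiableAt ℝ (fun y => f' y 1) l :=
    hdiff1.clm_apply (differentiableAt_const 1)
  have heq : (fun y => f' y 1) =ᶠ[nhds l] D1 := by
    filter_upwards [hu] with y hy
    have h3 : f' y = ContinuousLinearMap.smulRight (1 : ℝ →L[ℝ] ℝ) (D1 y) :=
      (hf' y hy).unique (hasDerivAt_iff_hasFDerivAt.1 (hXi y))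
    rw [h3]
    simp
  have hdiffD1 : DifferentiableAt ℝ D1 l := hdiffapp.congr_of_eventuallyEq heq.symm
  have hd := hdiffD1.hasDerivAt
  have hIic : UniqueDiffWithinAt ℝ (Iic l) l := uniqueDiffOn_Iic l l (mem_Iic.2 le_rfl)
  have hIci : UniqueDiffWithinAt ℝ (Ici l) l := uniqueDiffOn_Ici l l (mem_Ici.2 le_rfl)
  have hL2 : HasDerivWithinAt (IMC.F1 ω c sn) (deriv D1 l) (Iic l) l := by
    apply hd.hasDerivWithinAt.congr
    · intro y hy; rw [hD1app, if_pos (mem_Iic.1 hy)]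
    · rw [hD1app, if_pos le_rfl]
  have e1 : deriv D1 l = IMC.F2 ω c sn l := by
    have d1 := hL2.derivWithin hIic
    have d2 := ((IMC.hd_F1 (ω := ω) c sn l).hasDerivWithinAt (s := Iic l)).derivWithin hIic
    rw [← d1, d2]
  have hR2 : HasDerivWithinAt (IMC.G1 ω) (deriv D1 l) (Ici l) l := by
    apply hd.hasDerivWithinAt.congr
    · intro y hy
      rcases eq_or_lt_of_le (mem_Ici.1 hy) with h | h
      · rw [← h, hD1app, if_pos le_rfl]; exact jd.symm
      · rw [hD1app, if_neg (not_le.2 h)]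
    · rw [hD1app, if_pos le_rfl]; exact jd.symm
  have e2 : deriv D1 l = IMC.G2 ω l := by
    have d1 := hR2.derivWithin hIci
    have d2 := ((IMC.hd_G1 (ω := ω) l).hasDerivWithinAt (s := Ici l)).derivWithin hIci
    rw [← d1, d2]
  have hFG : IMC.F2 ω c sn l = IMC.G2 ω l := by rw [← e1, e2]
  have h2 := congrArg (fun v : R3 => v 2) hFG
  simp only [IMC.F2, IMC.G2, e3_apply_two] at h2
  rw [hcl] at h2
  nlinarith [hsnpos, hωpos]
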